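/- Let $G$ be a non-abelian split metacyclic $2$-group with cyclic center. Then $G$ is absolutely split; that is, there is a normal cyclic subgroup $\langle a\rangle$ with cyclic complement such that for every $x \in G$ with $\langle x\rangle \cap \langle a\rangle = 1$, there exists $y \in G$ with $x \in \langle y\rangle$ and $G = \langle a\rangle \rtimes \langle y\rangle$. -/

import Mathlib

open Finset Subgroup


lemma odd_coprime_two_pow {w : ℤ} (hw : Odd w) (k : ℕ) : IsCoprime ((2:ℤ)^k) w := by
  apply IsCoprime.pow_left
  obtain ⟨t, rfl⟩ := hw
  exact ⟨-t, 1, by ring⟩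

lemma sum_pow_two_pow_eq {σ : ℤ} (hσ : (4:ℤ) ∣ σ - 1) (k : ℕ) :
    ∃ w : ℤ, Odd w ∧ ∑ i ∈ range (2^k), σ^i = 2^k * w := by
  induction k with
  | zero => exact ⟨1, odd_one, by simp⟩
  | succ k ih =>
    obtain ⟨w, hw, hsum⟩ := ih
    have h4 : (4:ℤ) ∣ σ ^ (2^k) - 1 := by
      have h : σ ^ (2^k) - 1 ^ (2^k) = σ ^ (2^k) - 1 := by ring
      exact h ▸ dvd_trans hσ (sub_dvd_pow_sub_pow σ 1 (2^k))
    obtain ⟨t, ht⟩ := h4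
    have hsplit : ∑ i ∈ range (2^(k+1)), σ^i
        = (∑ i ∈ range (2^k), σ^i) + σ ^ (2^k) * ∑ i ∈ range (2^k), σ^i := by
      have h2 : 2^(k+1) = 2^k + 2^k := by ring
      rw [h2, Finset.sum_range_add, Finset.mul_sum]
      congr 1
      exact Finset.sum_congr rfl fun i _ => by rw [← pow_add]
    refine ⟨(2*t+1) * w, (odd_two_mul_add_one t).mul hw, ?_⟩
    have hσpow : σ ^ (2^k) = 4 * t + 1 := by linarith
    rw [hsplit, hsum, hσpow]
    ring

lemma sum_range_two_mul (ρ : ℤ) (k : ℕ) :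
    ∑ i ∈ range (2*k), ρ^i = (1+ρ) * ∑ i ∈ range k, (ρ^2)^i := by
  induction k with
  | zero => simp
  | succ k ih =>
    have h2 : 2*(k+1) = (2*k) + 1 + 1 := by ring
    rw [h2, Finset.sum_range_succ, Finset.sum_range_succ, ih, Finset.sum_range_succ,
      pow_succ, pow_mul]
    ring

lemma two_pow_dvd_pow_two_pow_sub_one {ρ : ℤ} (hρ : Odd ρ) {β : ℕ} {e : ℤ}
    (he : ρ + 1 = 2^β * e) (k : ℕ) (hk : 1 ≤ k) : (2:ℤ)^(β+k) ∣ ρ^(2^k) - 1 := by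
  induction k with
  | zero => omega
  | succ k ih =>
    rcases Nat.eq_or_lt_of_le hk with h1 | h1
    · -- k + 1 = 1, so k = 0
      have hk0 : k = 0 := by omega
      subst hk0
      obtain ⟨t, ht⟩ := hρ
      refine ⟨t * e, ?_⟩
      have : ρ ^ (2^1) - 1 = (ρ - 1) * (ρ + 1) := by ring
      rw [this, he, ht]
      ring
    · have hk' : 1 ≤ k := by omega
      obtain ⟨d, hd⟩ := ih hk'
      have heven : (2:ℤ) ∣ ρ^(2^k) + 1 := by
        obtain ⟨t, ht⟩ := hρ.pow (n := 2^k)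
        exact ⟨t+1, by linarith⟩
      obtain ⟨q, hq⟩ := heven
      refine ⟨d * q, ?_⟩
      have hpow : ρ ^ (2^(k+1)) = (ρ ^ (2^k))^2 := by
        rw [← pow_mul]; ring_nf
      have : ρ ^ (2^(k+1)) - 1 = (ρ^(2^k) - 1) * (ρ^(2^k) + 1) := by rw [hpow]; ring
      rw [this, hd, hq]
      ring


section helpers
variable {G : Type*} [Group G] {a b : G} {R : ℤ}

lemma conj_formula (hR : b * a * b⁻¹ = a ^ R) :
    ∀ (t : ℕ) (z : ℤ), b^t * a^z = a^(z * R^t) * b^t := by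
  have hbase : ∀ z : ℤ, b * a^z = a^(z * R) * b := by
    intro z
    have h1 : b * a^z * b⁻¹ = (b * a * b⁻¹)^z := by rw [conj_zpow]
    rw [hR, ← zpow_mul, mul_comm R z] at h1
    have := congrArg (· * b) h1
    simpa [mul_assoc] using this
  intro t
  induction t with
  | zero => intro z; simp
  | succ t ih =>
    intro z
    calc b^(t+1) * a^z = b^t * (b * a^z) := by rw [pow_succ]; group
      _ = b^t * (a^(z*R) * b) := by rw [hbase]
      _ = (b^t * a^(z*R)) * b := by rw [mul_assoc]
      _ = (a^(z*R*R^t) * b^t) * b := by rw [ih]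
      _ = a^(z * R^(t+1)) * b^t * b := by
          have hexp : z * R * R ^ t = z * R^(t+1) := by rw [pow_succ]; ring
          rw [hexp, mul_assoc]
      _ = a^(z * R^(t+1)) * b^(t+1) := by rw [mul_assoc, ← pow_succ]

lemma pow_formula (hR : b * a * b⁻¹ = a ^ R) (s : ℤ) (u : ℕ) :
    ∀ k : ℕ, (a^s * b^u)^k = a^(s * ∑ i ∈ range k, (R^u)^i) * b^(u*k) := by
  intro k
  induction k with
  | zero => simp
  | succ k ih =>
    rw [pow_succ, ih, Finset.sum_range_succ]
    calc a^(s * ∑ i ∈ range k, (R^u)^i) * b^(u*k) * (a^s * b^u)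
        = a^(s * ∑ i ∈ range k, (R^u)^i) * (b^(u*k) * a^s) * b^u := by group
      _ = a^(s * ∑ i ∈ range k, (R^u)^i) * (a^(s * R^(u*k)) * b^(u*k)) * b^u := by
          rw [conj_formula hR]
      _ = a^(s * ∑ i ∈ range k, (R^u)^i + s * R^(u*k)) * (b^(u*k) * b^u) := by
          rw [zpow_add]; group
      _ = a^(s * (∑ i ∈ range k, (R^u)^i + (R^u)^k)) * b^(u*(k+1)) := by
          have h1 : R^(u*k) = (R^u)^k := pow_mul R u k
          have h2 : u*(k+1) = u*k + u := by ring
          rw [h1, h2, pow_add, mul_add]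

lemma zpow_to_small_pow {g : G} {N : ℕ} (hN : 0 < N) (hg : g ^ N = 1) (w : ℤ) :
    ∃ j : ℕ, j < N ∧ g ^ w = g ^ j := by
  refine ⟨(w % (N:ℤ)).toNat, ?_, ?_⟩
  · have h1 : w % (N:ℤ) < N := Int.emod_lt_of_pos w (by exact_mod_cast hN)
    omega
  · have h0 : (0:ℤ) ≤ w % (N:ℤ) := Int.emod_nonneg w (by exact_mod_cast hN.ne')
    have hgN : g ^ ((N:ℤ)) = 1 := by rw [zpow_natCast, hg]
    calc g ^ w = g ^ ((N:ℤ) * (w / N) + w % N) := by rw [Int.mul_ediv_add_emod]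
      _ = (g ^ ((N:ℤ)))^(w / (N:ℤ)) * g ^ (w % (N:ℤ)) := by rw [zpow_add, zpow_mul]
      _ = g ^ (w % (N:ℤ)) := by rw [hgN]; simp
      _ = g ^ ((w % (N:ℤ)).toNat) := by rw [← zpow_natCast, Int.toNat_of_nonneg h0]

end helpers

lemma arith_key (m n v : ℕ) (ρ c : ℤ) (hρ : Odd ρ) (hρ3 : 3 ≤ ρ) (hvn : v < n)
    (h2 : ¬ (2:ℤ)^m ∣ ρ^(2^(n-1)) - 1)
    (hc : (2:ℤ)^m ∣ c * ∑ i ∈ range (2^(n-v)), (ρ^(2^v))^i) :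
    ∃ s : ℤ, ((2:ℤ)^m ∣ s * (∑ i ∈ range (2^v), ρ^i) - c) ∧
      (2:ℤ)^m ∣ s * ∑ i ∈ range (2^n), ρ^i := by
  rcases Nat.eq_zero_or_pos v with hv0 | hv1
  · subst hv0
    refine ⟨c, by simp, ?_⟩
    simpa using hc
  · obtain ⟨v', rfl⟩ : ∃ v', v = v' + 1 := ⟨v-1, by omega⟩
    -- β, e : ρ + 1 = 2^β * e, e odd, β ≥ 1
    have hρpos : (0:ℤ) < ρ + 1 := by omega
    obtain ⟨β, e', he'odd, he'⟩ := Nat.exists_eq_two_pow_mul_odd (n := (ρ+1).toNat) (by omega)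
    have he : ρ + 1 = 2^β * (e' : ℤ) := by
      have := congrArg (fun x : ℕ => (x : ℤ)) he'
      push_cast at this
      rw [Int.toNat_of_nonneg (by omega)] at this
      exact this
    set e : ℤ := (e' : ℤ) with he_def
    have heodd : Odd e := by rw [he_def]; exact_mod_cast he'odd
    have hβ1 : 1 ≤ β := by
      by_contra h
      have hβ0 : β = 0 := by omega
      rw [hβ0, pow_zero, one_mul] at he
      obtain ⟨t, ht⟩ := hρ
      obtain ⟨t2, ht2⟩ := heodd
      omega
    -- β + n ≤ m
    have hβn : β + n ≤ m := by
      by_contra h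
      push_neg at h
      apply h2
      have hdvd := two_pow_dvd_pow_two_pow_sub_one hρ he (n-1) (by omega)
      exact dvd_trans (pow_dvd_pow (2:ℤ) (by omega)) hdvd
    obtain ⟨k, hk1, rfl⟩ : ∃ k, 1 ≤ k ∧ n = (v' + 1) + k := ⟨n - (v'+1), by omega, by omega⟩
    obtain ⟨d, rfl⟩ : ∃ d, m = β + ((v'+1) + k) + d := ⟨m - (β + ((v'+1)+k)), by omega⟩
    -- structure of T', T
    have hρ4 : (4:ℤ) ∣ ρ^2 - 1 := by
      obtain ⟨t, rfl⟩ := hρ; exact ⟨t*t+t, by ring⟩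
    have hσ4 : (4:ℤ) ∣ ρ^(2^(v'+1)) - 1 := by
      have hpm : ρ^(2^(v'+1)) = (ρ^2)^(2^v') := by
        rw [← pow_mul]; congr 1; rw [pow_succ]; ring
      have := dvd_trans hρ4 (sub_dvd_pow_sub_pow (ρ^2) 1 (2^v'))
      rw [one_pow] at this
      rwa [hpm]
    obtain ⟨w₂, hw₂odd, hT'⟩ := sum_pow_two_pow_eq hσ4 k
    obtain ⟨w, hwodd, hS⟩ := sum_pow_two_pow_eq hρ4 v'
    have hT : ∑ i ∈ range (2^(v'+1)), ρ^i = 2^(β+v') * (e * w) := by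
      have h2v : 2^(v'+1) = 2 * 2^v' := by rw [pow_succ]; ring
      rw [h2v, sum_range_two_mul, hS]
      rw [add_comm 1 ρ, he]
      ring
    -- extract powers of 2 from c
    have hkn : ((v'+1) + k) - (v'+1) = k := by omega
    rw [hkn, hT'] at hc
    have hcd : (2:ℤ)^(β + (v'+1) + d) ∣ c := by
      apply (odd_coprime_two_pow hw₂odd _).dvd_of_dvd_mul_right
      have h1 : (2:ℤ)^(β + ((v'+1) + k) + d) = 2^k * 2^(β + (v'+1) + d) := by
        rw [← pow_add]; congr 1; omega
      have h2' : c * (2^k * w₂) = 2^k * (c * w₂) := by ring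
      rw [h1, h2'] at hc
      exact (mul_dvd_mul_iff_left (a := (2:ℤ)^k) (by positivity)).mp hc
    obtain ⟨c₁, hc₁⟩ := hcd
    -- inverse of e*w mod 2^m
    obtain ⟨α, T₁, hbez⟩ := odd_coprime_two_pow (heodd.mul hwodd) (β + ((v'+1)+k) + d)
    -- V = T * T'
    have hV : ∑ i ∈ range (2^((v'+1)+k)), ρ^i
        = (∑ i ∈ range (2^(v'+1)), ρ^i) * (∑ i ∈ range (2^k), (ρ^(2^(v'+1)))^i) := by
      have hρ1 : ρ - 1 ≠ 0 := by omega
      apply mul_right_cancel₀ hρ1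
      have key : (∑ i ∈ range (2^k), (ρ^(2^(v'+1)))^i) * (ρ^(2^(v'+1)) - 1)
          = ρ ^ 2^((v'+1)+k) - 1 := by rw [geom_sum_mul, ← pow_mul, ← pow_add]
      calc (∑ i ∈ range (2^((v'+1)+k)), ρ^i) * (ρ - 1) = ρ^(2^((v'+1)+k)) - 1 := geom_sum_mul ρ _
          _ = (∑ i ∈ range (2^k), (ρ^(2^(v'+1)))^i) * (ρ^(2^(v'+1)) - 1) := key.symm
          _ = (∑ i ∈ range (2^k), (ρ^(2^(v'+1)))^i) * ((∑ i ∈ range (2^(v'+1)), ρ^i) * (ρ - 1)) := by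
            rw [geom_sum_mul ρ (2^(v'+1))]
          _ = (∑ i ∈ range (2^(v'+1)), ρ^i) * (∑ i ∈ range (2^k), (ρ^(2^(v'+1)))^i) * (ρ - 1) := by
            ring
    refine ⟨2^(d+1) * c₁ * T₁, ?_, ?_⟩
    · refine ⟨-(2^(β+(v'+1)+d) * c₁ * α), ?_⟩
      rw [hT, hc₁]
      linear_combination (2:ℤ)^(β+(v'+1)+d) * c₁ * hbez
    · refine ⟨c₁ * T₁ * e * w * w₂, ?_⟩
      rw [hV, hT, hT']
      ring

/-- Let `G` be a non-abelian split metacyclic `2`-group with cyclic center. Then `G`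
is absolutely split: there is a normal cyclic subgroup `⟨a⟩` with a cyclic
complement such that for every `x ∈ G` with `⟨x⟩ ∩ ⟨a⟩ = 1` there is `y ∈ G` with
`x ∈ ⟨y⟩` and `G = ⟨a⟩ ⋊ ⟨y⟩`. -/
theorem stmt_12 (G : Type*) [Group G] [Finite G]
    (hp : IsPGroup 2 G)
    (hna : ¬ ∀ g h : G, g * h = h * g)
    (hsplit : ∃ a b : G, (Subgroup.zpowers a).Normal ∧
      Subgroup.zpowers a ⊔ Subgroup.zpowers b = ⊤ ∧
      Subgroup.zpowers a ⊓ Subgroup.zpowers b = ⊥)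
    (hZ : IsCyclic (Subgroup.center G)) :
    ∃ a b : G, (Subgroup.zpowers a).Normal ∧
      Subgroup.zpowers a ⊔ Subgroup.zpowers b = ⊤ ∧
      Subgroup.zpowers a ⊓ Subgroup.zpowers b = ⊥ ∧
      ∀ x : G, Subgroup.zpowers x ⊓ Subgroup.zpowers a = ⊥ →
        ∃ y : G, x ∈ Subgroup.zpowers y ∧
          Subgroup.zpowers a ⊔ Subgroup.zpowers y = ⊤ ∧
          Subgroup.zpowers a ⊓ Subgroup.zpowers y = ⊥ := by
  classical
  haveI : Fact (Nat.Prime 2) := ⟨Nat.prime_two⟩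
  obtain ⟨a, b, hN, hsup, hinf⟩ := hsplit
  refine ⟨a, b, hN, hsup, hinf, ?_⟩
  -- orders are powers of 2
  obtain ⟨m, horda⟩ := (IsPGroup.iff_orderOf.mp hp) a
  obtain ⟨n, hordb⟩ := (IsPGroup.iff_orderOf.mp hp) b
  -- m ≥ 1
  obtain ⟨m', rfl⟩ : ∃ m', m = m' + 1 := by
    have hm0 : m ≠ 0 := by
      rintro rfl
      rw [pow_zero, orderOf_eq_one_iff] at horda
      rw [horda, zpowers_one_eq_bot, bot_sup_eq] at hsup
      apply hna
      intro g h
      have hg := hsup ▸ Subgroup.mem_top g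
      have hh := hsup ▸ Subgroup.mem_top h
      obtain ⟨k, rfl⟩ := Subgroup.mem_zpowers_iff.mp hg
      obtain ⟨l, rfl⟩ := Subgroup.mem_zpowers_iff.mp hh
      rw [← zpow_add, ← zpow_add, add_comm]
    exact ⟨m - 1, by omega⟩
  obtain ⟨n', rfl⟩ : ∃ n', n = n' + 1 := by
    have hn0 : n ≠ 0 := by
      rintro rfl
      rw [pow_zero, orderOf_eq_one_iff] at hordb
      rw [hordb, zpowers_one_eq_bot, sup_bot_eq] at hsup
      apply hna
      intro g h
      have hg := hsup ▸ Subgroup.mem_top g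
      have hh := hsup ▸ Subgroup.mem_top h
      obtain ⟨k, rfl⟩ := Subgroup.mem_zpowers_iff.mp hg
      obtain ⟨l, rfl⟩ := Subgroup.mem_zpowers_iff.mp hh
      rw [← zpow_add, ← zpow_add, add_comm]
    exact ⟨n - 1, by omega⟩
  set m := m' + 1 with hm_def
  set n := n' + 1 with hn_def
  -- basic powers
  have hb2n : b ^ (2^n) = 1 := by rw [← hordb]; exact pow_orderOf_eq_one b
  have ha2m : a ^ ((2:ℤ)^m) = 1 := by
    have hcast : ((2^m : ℕ) : ℤ) = (2:ℤ)^m := by push_cast; ring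
    rw [← hcast, zpow_natCast, ← horda, pow_orderOf_eq_one]
  have haDvd : ∀ z z' : ℤ, a ^ z = a ^ z' ↔ (2:ℤ)^m ∣ z - z' := by
    intro z z'
    rw [← mul_inv_eq_one, ← zpow_sub, ← orderOf_dvd_iff_zpow_eq_one, horda]
    constructor
    · intro h; exact_mod_cast h
    · intro h; exact_mod_cast h
  have haOne : ∀ z : ℤ, a ^ z = 1 ↔ (2:ℤ)^m ∣ z := by
    intro z
    have := haDvd z 0
    simpa using this
  -- conjugation relation
  obtain ⟨r₀, hr₀⟩ := Subgroup.mem_zpowers_iff.mp (hN.conj_mem a (Subgroup.mem_zpowers a) b)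
  set R : ℤ := (2:ℤ)^m + r₀ % (2:ℤ)^m with hR_def
  have hRa : b * a * b⁻¹ = a ^ R := by
    rw [← hr₀, haDvd]
    have h1 : r₀ - R = (2:ℤ)^m * (r₀ / 2^m - 1) := by rw [hR_def, Int.emod_def]; ring
    exact ⟨_, h1⟩
  have hRlb : (2:ℤ)^m ≤ R := by
    have := Int.emod_nonneg r₀ (b := (2:ℤ)^m) (by positivity)
    omega
  -- R is odd
  have hRodd : Odd R := by
    have hordconj : orderOf (b * a * b⁻¹) = 2^m := by
      have h := orderOf_injective (MulAut.conj b).toMonoidHom (MulEquiv.injective _) a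
      simpa [MulAut.conj_apply, horda] using h
    have hRnn : (0:ℤ) ≤ R := le_trans (by positivity) hRlb
    have hRn : a ^ R = a ^ (R.toNat) := by rw [← zpow_natCast, Int.toNat_of_nonneg hRnn]
    have h2 : orderOf (a ^ (R.toNat)) = 2^m := by rw [← hRn, ← hRa, hordconj]
    rw [orderOf_pow, horda] at h2
    have hgcd : Nat.gcd (2^m) R.toNat = 1 := by
      rcases Nat.div_eq_self.mp h2 with h | h
      · exact absurd h (by positivity)
      · exact h
    have : ¬ (2 ∣ R.toNat) := by
      intro h2d
      have : 2 ∣ Nat.gcd (2^m) R.toNat :=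
        Nat.dvd_gcd (dvd_pow_self 2 (by omega)) h2d
      omega
    have : Odd R.toNat := Nat.odd_iff.mpr (by omega)
    have h4 : Odd ((R.toNat : ℤ)) := by exact_mod_cast this
    rwa [Int.toNat_of_nonneg hRnn] at h4
  have hR3 : 3 ≤ R := by
    obtain ⟨t, ht⟩ := hRodd
    have h2m : (2:ℤ) ≤ 2^m := by
      calc (2:ℤ) = 2^1 := (pow_one 2).symm
        _ ≤ 2^m := pow_le_pow_right₀ (by norm_num) (by omega)
    omega
  -- decomposition of arbitrary elements
  have DECOMP : ∀ g : G, ∃ (cz : ℤ) (j : ℕ), j < 2^n ∧ g = a^cz * b^j := by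
    intro g
    have hmem : g ∈ (↑(zpowers a ⊔ zpowers b) : Set G) := by rw [hsup]; trivial
    rw [Subgroup.normal_mul] at hmem
    obtain ⟨p, hp', q, hq', hpq⟩ := Set.mem_mul.mp hmem
    obtain ⟨z, hz⟩ := Subgroup.mem_zpowers_iff.mp hp'
    obtain ⟨w, hw⟩ := Subgroup.mem_zpowers_iff.mp hq'
    obtain ⟨j, hjlt, hj⟩ := zpow_to_small_pow (N := 2^n) (by positivity) hb2n w
    exact ⟨z, j, hjlt, by rw [← hpq, ← hz, ← hw, hj]⟩
  have MEMA : ∀ (cz : ℤ) (j : ℕ), j < 2^n → a^cz * b^j ∈ zpowers a → j = 0 := by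
    intro cz j hjlt hmem
    have hbj : b^j ∈ zpowers a := by
      have := Subgroup.mul_mem _ (Subgroup.inv_mem _ (Subgroup.mem_zpowers_iff.mpr ⟨cz, rfl⟩)) hmem
      simpa [← mul_assoc] using this
    have hbj2 : b^j ∈ zpowers a ⊓ zpowers b :=
      Subgroup.mem_inf.mpr ⟨hbj, Subgroup.mem_zpowers_iff.mpr ⟨(j:ℤ), zpow_natCast b j⟩⟩
    rw [hinf, Subgroup.mem_bot] at hbj2
    have := orderOf_dvd_of_pow_eq_one hbj2
    rw [hordb] at this
    exact Nat.eq_zero_of_dvd_of_lt this hjlt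
  -- no central involution outside <a> : order of R mod 2^m is exactly 2^n
  have hR2 : ¬ (2:ℤ)^m ∣ R^(2^n') - 1 := by
    intro hcon
    set z₁ := b ^ (2^n' : ℕ) with hz₁def
    set z₂ := a ^ (2^m' : ℕ) with hz₂def
    have hz₂zpow : z₂ = a ^ ((2:ℤ)^m') := by
      rw [hz₂def, ← zpow_natCast]
      congr 1
    have hz₁a : Commute z₁ a := by
      have h := conj_formula hRa (2^n') 1
      have he : a ^ ((1:ℤ) * R^(2^n')) = a ^ (1:ℤ) := by
        rw [haDvd]; simpa using hcon
      rw [he] at h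
      simp at h; exact h
    have hz₂b : Commute b z₂ := by
      have h := conj_formula hRa 1 ((2:ℤ)^m')
      have he : a ^ ((2:ℤ)^m' * R^1) = a ^ ((2:ℤ)^m') := by
        rw [haDvd]
        obtain ⟨t, ht⟩ := hRodd
        refine ⟨t, ?_⟩
        rw [ht, hm_def]
        ring
      rw [he] at h
      rw [hz₂zpow]
      simp at h; exact h
    have hc₁ : z₁ ∈ Subgroup.center G := by
      apply Subgroup.mem_center_iff.mpr
      intro g
      obtain ⟨cz, j, hjlt, rfl⟩ := DECOMP g
      exact (((hz₁a.zpow_right cz).mul_right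
        ((Commute.refl b).pow_pow (2^n') j)).symm).eq
    have hc₂ : z₂ ∈ Subgroup.center G := by
      apply Subgroup.mem_center_iff.mpr
      intro g
      obtain ⟨cz, j, hjlt, rfl⟩ := DECOMP g
      have ha' : Commute z₂ (a ^ cz) := by
        rw [hz₂zpow]; exact (Commute.refl a).zpow_zpow _ _
      exact ((ha'.mul_right (hz₂b.symm.pow_right j)).symm).eq
    have hgcd₁ : Nat.gcd (2^(n'+1)) (2^n') = 2^n' :=
      Nat.gcd_eq_right (pow_dvd_pow 2 (Nat.le_succ n'))
    have hord₁ : orderOf z₁ = 2 := by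
      rw [hz₁def, orderOf_pow, hordb, hn_def, hgcd₁, pow_succ, Nat.mul_div_cancel_left _ (by positivity)]
    have hgcd₂ : Nat.gcd (2^(m'+1)) (2^m') = 2^m' :=
      Nat.gcd_eq_right (pow_dvd_pow 2 (Nat.le_succ m'))
    have hord₂ : orderOf z₂ = 2 := by
      rw [hz₂def, orderOf_pow, horda, hm_def, hgcd₂, pow_succ, Nat.mul_div_cancel_left _ (by positivity)]
    have hne₁ : z₁ ≠ 1 := by
      intro h; rw [h, orderOf_one] at hord₁; omega
    have hne₂ : z₂ ≠ 1 := by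
      intro h; rw [h, orderOf_one] at hord₂; omega
    have hne₁₂ : z₁ ≠ z₂ := by
      intro h
      have hmem : z₁ ∈ zpowers a ⊓ zpowers b := by
        refine Subgroup.mem_inf.mpr ⟨?_, ?_⟩
        · rw [h, hz₂def]; exact ⟨((2^m' : ℕ) : ℤ), zpow_natCast a _⟩
        · rw [hz₁def]; exact ⟨((2^n' : ℕ) : ℤ), zpow_natCast b _⟩
      rw [hinf, Subgroup.mem_bot] at hmem
      exact hne₁ hmem
    -- three square roots of 1 in the cyclic center
    haveI := hZ
    haveI : Fintype (Subgroup.center G) := Fintype.ofFinite _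
    have hcard := IsCyclic.card_pow_eq_one_le (α := Subgroup.center G) (n := 2) (by norm_num)
    have hsq₁ : (⟨z₁, hc₁⟩ : Subgroup.center G)^2 = 1 := by
      ext
      show z₁^2 = 1
      rw [hz₁def, ← pow_mul, ← pow_succ, ← hn_def, ← hordb, pow_orderOf_eq_one]
    have hsq₂ : (⟨z₂, hc₂⟩ : Subgroup.center G)^2 = 1 := by
      ext
      show z₂^2 = 1
      rw [hz₂def, ← pow_mul, ← pow_succ, ← hm_def, ← horda, pow_orderOf_eq_one]
    have hsub : ({1, ⟨z₁, hc₁⟩, ⟨z₂, hc₂⟩} : Finset (Subgroup.center G))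
        ⊆ Finset.filter (fun c => c^2 = 1) Finset.univ := by
      intro c hc
      simp only [Finset.mem_insert, Finset.mem_singleton] at hc
      rw [Finset.mem_filter]
      refine ⟨Finset.mem_univ _, ?_⟩
      rcases hc with rfl | rfl | rfl
      · simp
      · exact hsq₁
      · exact hsq₂
    have hn2 : (⟨z₁, hc₁⟩ : Subgroup.center G) ∉ ({⟨z₂, hc₂⟩} : Finset (Subgroup.center G)) := by
      simp only [Finset.mem_singleton]
      intro h
      exact hne₁₂ (congrArg Subtype.val h)
    have hn1 : (1 : Subgroup.center G) ∉
        ({⟨z₁, hc₁⟩, ⟨z₂, hc₂⟩} : Finset (Subgroup.center G)) := by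
      simp only [Finset.mem_insert, Finset.mem_singleton]
      intro h
      rcases h with h | h
      · exact hne₁ (congrArg Subtype.val h).symm
      · exact hne₂ (congrArg Subtype.val h).symm
    have hcard3 : ({1, ⟨z₁, hc₁⟩, ⟨z₂, hc₂⟩} : Finset (Subgroup.center G)).card = 3 := by
      rw [Finset.card_insert_of_notMem hn1, Finset.card_insert_of_notMem hn2,
        Finset.card_singleton]
    have := Finset.card_le_card hsub
    omega
  -- order of R^{2^n} is 1 mod 2^m
  have hA2n : (2:ℤ)^m ∣ R^(2^n) - 1 := by
    have h := conj_formula hRa (2^n) 1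
    rw [hb2n, one_mul, mul_one] at h
    have := (haDvd _ _).mp h.symm
    simpa using this
  -- now the main work
  intro x hx
  obtain ⟨c, j0, hj0lt, hxeq⟩ := DECOMP x
  by_cases hj00 : j0 = 0
  · have hxa : x ∈ zpowers a := by rw [hxeq, hj00, pow_zero, mul_one]; exact ⟨c, rfl⟩
    have hx1 : x ∈ zpowers x ⊓ zpowers a := Subgroup.mem_inf.mpr ⟨Subgroup.mem_zpowers x, hxa⟩
    rw [hx, Subgroup.mem_bot] at hx1
    exact ⟨b, by rw [hx1]; exact Subgroup.one_mem _, hsup, hinf⟩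
  · obtain ⟨v, u, huodd, hj0⟩ := Nat.exists_eq_two_pow_mul_odd hj00
    have hu1 : 1 ≤ u := by
      obtain ⟨t, ht⟩ := huodd; omega
    have hvn : v < n := by
      have h1 : 2^v ≤ j0 := by
        calc 2^v = 2^v * 1 := (mul_one _).symm
          _ ≤ 2^v * u := Nat.mul_le_mul_left _ hu1
          _ = j0 := hj0.symm
      have h2 : (2:ℕ)^v < 2^n := lt_of_le_of_lt h1 hj0lt
      exact (Nat.pow_lt_pow_iff_right (by norm_num)).mp h2
    have hρodd : Odd (R^u) := hRodd.pow
    have hρ3 : 3 ≤ R^u := le_trans hR3 (le_self_pow₀ (by omega) (by omega))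
    -- order condition for ρ = R^u
    have hρ2 : ¬ (2:ℤ)^m ∣ (R^u)^(2^n') - 1 := by
      intro hcon
      apply hR2
      have hMcast : ((2^m : ℕ) : ℤ) = (2:ℤ)^m := by push_cast; ring
      have hdcast : ∀ z : ℤ, (2:ℤ)^m ∣ z ↔ ((z : ZMod (2^m)) = 0) := by
        intro z
        rw [ZMod.intCast_zmod_eq_zero_iff_dvd, hMcast]
      set ξ : ZMod (2^m) := (R : ZMod (2^m))^(2^n') with hξ
      have hξu : ξ^u = 1 := by
        have h := (hdcast _).mp hcon
        push_cast at h
        rw [sub_eq_zero] at h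
        rw [hξ, ← pow_mul, mul_comm, pow_mul]
        exact h
      have hξ2 : ξ^2 = 1 := by
        have h := (hdcast _).mp hA2n
        push_cast at h
        rw [sub_eq_zero] at h
        rw [hξ, ← pow_mul, ← pow_succ, ← hn_def]
        exact h
      have hd2 : orderOf ξ ∣ 2 := orderOf_dvd_of_pow_eq_one hξ2
      have hdu : orderOf ξ ∣ u := orderOf_dvd_of_pow_eq_one hξu
      have hξ1 : ξ = 1 := by
        rw [← orderOf_eq_one_iff]
        rcases (Nat.dvd_prime Nat.prime_two).mp hd2 with h | h
        · exact h
        · exfalso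
          rw [h] at hdu
          obtain ⟨t, ht⟩ := huodd
          omega
      have : ((R^(2^n') - 1 : ℤ) : ZMod (2^m)) = 0 := by
        push_cast
        rw [sub_eq_zero]
        exact hξ1
      exact (hdcast _).mpr this
    -- hypothesis on c from triviality of ⟨x⟩ ⊓ ⟨a⟩
    have hble : ∀ k : ℕ, b ^ (u * 2^n * k) = 1 := by
      intro k
      rw [show u * 2^n * k = 2^n * (u * k) by ring, pow_mul, hb2n, one_pow]
    have hj0exp : j0 * 2^(n-v) = u * 2^n := by
      rw [hj0]
      have : (2:ℕ)^v * 2^(n-v) = 2^n := by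
        rw [← pow_add]
        congr 1
        omega
      calc 2^v * u * 2^(n-v) = u * (2^v * 2^(n-v)) := by ring
        _ = u * 2^n := by rw [this]
    have hRj0 : (R:ℤ)^j0 = (R^u)^(2^v) := by
      rw [hj0, mul_comm (2^v) u, pow_mul]
    have hcT' : (2:ℤ)^m ∣ c * ∑ i ∈ range (2^(n-v)), ((R^u)^(2^v))^i := by
      have hxp := pow_formula hRa c j0 (2^(n-v))
      rw [← hxeq] at hxp
      rw [hj0exp] at hxp
      have hb1 : b ^ (u * 2^n) = 1 := by
        have := hble 1
        simpa using this
      rw [hb1, mul_one, hRj0] at hxp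
      have hmem : x^(2^(n-v)) ∈ zpowers x ⊓ zpowers a :=
        Subgroup.mem_inf.mpr ⟨⟨((2^(n-v) : ℕ) : ℤ), zpow_natCast x _⟩,
          by rw [hxp]; exact ⟨_, rfl⟩⟩
      rw [hx, Subgroup.mem_bot] at hmem
      rw [hxp] at hmem
      exact (haOne _).mp hmem
    obtain ⟨s, hs1, hs2⟩ := arith_key m n v (R^u) c hρodd hρ3 hvn
      (by rw [show n - 1 = n' by omega]; exact hρ2) hcT'
    refine ⟨a^s * b^u, ?_, ?_, ?_⟩
    · -- x ∈ zpowers y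
      refine ⟨((2^v : ℕ) : ℤ), ?_⟩
      show (a^s * b^u) ^ ((2^v : ℕ) : ℤ) = x
      rw [zpow_natCast, pow_formula hRa s u (2^v), (haDvd _ _).mpr hs1,
        mul_comm u (2^v), ← hj0, ← hxeq]
    · -- sup
      apply le_antisymm le_top
      rw [← hsup]
      apply sup_le le_sup_left
      rw [Subgroup.zpowers_le]
      have hbu : b^u ∈ zpowers a ⊔ zpowers (a^s * b^u) := by
        have h1 : (a^s)⁻¹ * (a^s * b^u) ∈ zpowers a ⊔ zpowers (a^s * b^u) :=
          Subgroup.mul_mem _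
            (Subgroup.inv_mem _ (Subgroup.mem_sup_left ⟨s, rfl⟩))
            (Subgroup.mem_sup_right (Subgroup.mem_zpowers _))
        simpa [← mul_assoc] using h1
      have hcop : Nat.Coprime u (2^n) := by
        apply Nat.Coprime.pow_right
        have h2u : ¬ (2 ∣ u) := by obtain ⟨t, ht⟩ := huodd; omega
        exact ((Nat.prime_two.coprime_iff_not_dvd).mpr h2u).symm
      have hicop : IsCoprime (u : ℤ) ((2^n : ℕ) : ℤ) := by
        rw [Int.isCoprime_iff_gcd_eq_one, Int.gcd_natCast_natCast]
        exact hcop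
      obtain ⟨p, q, hpq⟩ := hicop
      have hmem2 : (b^u)^p ∈ zpowers a ⊔ zpowers (a^s * b^u) :=
        Subgroup.zpow_mem _ hbu p
      have hbp : (b^u)^p = b := by
        rw [← zpow_natCast b u, ← zpow_mul,
          show (u:ℤ)*p = 1 - ((2^n : ℕ):ℤ)*q by linarith,
          zpow_sub, zpow_one, zpow_mul, zpow_natCast, hb2n, one_zpow, inv_one, mul_one]
      rw [hbp] at hmem2
      exact hmem2
    · -- inf
      rw [eq_bot_iff]
      intro g hg
      obtain ⟨hga, hgy⟩ := Subgroup.mem_inf.mp hg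
      obtain ⟨κ, hκ⟩ := Subgroup.mem_zpowers_iff.mp hgy
      have hy2n : (a^s * b^u)^(2^n) = 1 := by
        rw [pow_formula hRa s u (2^n), (haOne _).mpr hs2, one_mul,
          show u * 2^n = u * 2^n * 1 by ring, hble 1]
      obtain ⟨kk, hkklt, hkk⟩ := zpow_to_small_pow (by positivity) hy2n κ
      have hgform : g = a^(s * ∑ i ∈ range kk, ((R:ℤ)^u)^i) * b^((u*kk) % 2^n) := by
        rw [← hκ, hkk, pow_formula hRa s u kk, ← hordb, pow_mod_orderOf]
      have hj : (u*kk) % 2^n = 0 := by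
        apply MEMA _ _ (Nat.mod_lt _ (by positivity))
        rw [← hgform]
        exact hga
      have hdvd : 2^n ∣ u * kk := Nat.dvd_of_mod_eq_zero hj
      have hcop : Nat.Coprime (2^n) u := by
        apply Nat.Coprime.pow_left
        have h2u : ¬ (2 ∣ u) := by obtain ⟨t, ht⟩ := huodd; omega
        exact (Nat.prime_two.coprime_iff_not_dvd).mpr h2u
      have hkk0 : kk = 0 := by
        have : 2^n ∣ kk := hcop.dvd_of_dvd_mul_left hdvd
        exact Nat.eq_zero_of_dvd_of_lt this hkklt
      rw [Subgroup.mem_bot, ← hκ, hkk, hkk0, pow_zero]
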